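/- Let G be a graph and w a positive integer. If the tree-cut torso-width of G is at most w, then there exists no edge-tangle of order at least w+1 in G. -/

import Mathlib

/-- A finite multigraph (loops and parallel edges allowed): each edge in `E`
has an unordered pair of endpoints in `V`. -/
structure Multigraph (V E : Type) where
  ends : E → Sym2 V

namespace Multigraph

variable {V E : Type}

/-- The edge `e` has an end in the vertex set `A`. -/
def incident (G : Multigraph V E) (A : Set V) (e : E) : Prop :=
  ∃ x ∈ G.ends e, x ∈ A

/-- The edge `e` has one end in `A` and one end in `B`. -/
def crosses (G : Multigraph V E) (A B : Set V) (e : E) : Prop :=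
  G.incident A e ∧ G.incident B e

/-- The order of the edge-cut `[A,B]`: the number of edges with one end in `A`
and one end in `B`. -/
noncomputable def cutOrder (G : Multigraph V E) (A B : Set V) : ℕ :=
  {e | G.crosses A B e}.ncard

/-- `[A,B]` is an edge-cut of `G`: an ordered pair of disjoint vertex sets
covering all vertices. -/
def IsCut (G : Multigraph V E) (A B : Set V) : Prop :=
  Disjoint A B ∧ A ∪ B = Set.univ

end Multigraph

/-- An edge-tangle of order `θ` in `G`: a set of edge-cuts of order less than
`θ` satisfying axioms (E1)-(E3). -/
structure EdgeTangle {V E : Type} (G : Multigraph V E) (θ : ℕ) where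
  mem : Set V → Set V → Prop
  isCut_of_mem : ∀ A B, mem A B → G.IsCut A B
  order_lt_of_mem : ∀ A B, mem A B → G.cutOrder A B < θ
  e1 : ∀ A B, G.IsCut A B → G.cutOrder A B < θ → mem A B ∨ mem B A
  e2 : ∀ A₁ B₁ A₂ B₂ A₃ B₃, mem A₁ B₁ → mem A₂ B₂ → mem A₃ B₃ →
    (B₁ ∩ B₂ ∩ B₃).Nonempty
  e3 : ∀ A B, mem A B → θ ≤ {e | G.incident B e}.ncard

/-- A tree-cut decomposition of `G`: a (finite) tree `T` together with pairwise
disjoint bags partitioning `V(G)`. -/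
structure TreeCutDecomp {V E : Type} (G : Multigraph V E) (T : Type) where
  tree : SimpleGraph T
  isTree : tree.IsTree
  finite : Finite T
  bag : T → Set V
  disjoint_bags : ∀ s t : T, s ≠ t → Disjoint (bag s) (bag t)
  cover : ∀ v : V, ∃ t : T, v ∈ bag t

namespace TreeCutDecomp

variable {V E T : Type} {G : Multigraph V E}

/-- The set of nodes of the component of `T - t₁t₂` containing `t₁`. -/
def side (D : TreeCutDecomp G T) (t₁ t₂ : T) : Set T :=
  {s | Relation.ReflTransGen
    (fun x y => D.tree.Adj x y ∧ ¬(x = t₁ ∧ y = t₂) ∧ ¬(x = t₂ ∧ y = t₁)) t₁ s}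

/-- The union of the bags over the component of `T - t₁t₂` containing `t₁`. -/
def sideBags (D : TreeCutDecomp G T) (t₁ t₂ : T) : Set V :=
  ⋃ s ∈ D.side t₁ t₂, D.bag s

/-- The adhesion set of the tree edge `t₁t₂`: the edges of `G` with one end in
the bags on the `t₁` side and one end in the bags on the `t₂` side. -/
def adhEdges (D : TreeCutDecomp G T) (t₁ t₂ : T) : Set E :=
  {e | G.crosses (D.sideBags t₁ t₂) (D.sideBags t₂ t₁) e}

/-- `x` and `y` are joined by a path of `T` avoiding the node set `C`. -/
def compRel (D : TreeCutDecomp G T) (C : Set T) (x y : T) : Prop :=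
  Relation.ReflTransGen (fun a b => D.tree.Adj a b ∧ a ∉ C ∧ b ∉ C) x y

/-- The union of the bags over the component of `T - C` containing `s`. -/
def compBags (D : TreeCutDecomp G T) (C : Set T) (s : T) : Set V :=
  ⋃ s' ∈ {s' | D.compRel C s s'}, D.bag s'

/-- The edges of the torso at `C`, viewed as edges of `G`: those edges having
no component of `T - C` whose bags contain all their ends. -/
def torsoEdges (D : TreeCutDecomp G T) (C : Set T) : Set E :=
  {e | ¬ ∃ s : T, s ∉ C ∧ ∀ x ∈ G.ends e, x ∈ D.compBags C s}

/-- `x` and `y` are joined in the forest obtained from `T` by deleting all edges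
whose adhesion set has fewer than `θ` elements. -/
def cellRel (D : TreeCutDecomp G T) (θ : ℕ) (x y : T) : Prop :=
  Relation.ReflTransGen (fun a b => D.tree.Adj a b ∧ θ ≤ (D.adhEdges a b).ncard) x y

/-- A pseudo-`θ`-cell: a component of the forest obtained from `T` by deleting
all edges whose adhesion set has size less than `θ`. -/
def IsPseudoCell (D : TreeCutDecomp G T) (θ : ℕ) (C : Set T) : Prop :=
  ∃ t : T, C = {s | D.cellRel θ t s}

/-- A `θ`-cell: a pseudo-`θ`-cell whose torso has at least `θ` edges. -/
def IsCell (D : TreeCutDecomp G T) (θ : ℕ) (C : Set T) : Prop :=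
  D.IsPseudoCell θ C ∧ θ ≤ (D.torsoEdges C).ncard

/-- `(T,𝒳)` is `θ`-smooth. -/
def Smooth (D : TreeCutDecomp G T) (θ : ℕ) : Prop :=
  ∀ C : Set T, (D.IsCell θ C ∨ ∃ t : T, C = {t}) →
    ∀ Y Z : Set E, Y ⊆ D.torsoEdges C → Z ⊆ D.torsoEdges C →
      Y.ncard = Z.ncard → Y.ncard ≤ θ →
      ¬ ∃ A B : Set V, G.IsCut A B ∧ G.cutOrder A B < Y.ncard ∧
        (∀ e ∈ Y, G.incident A e) ∧ (∀ e ∈ Z, G.incident B e)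

end TreeCutDecomp

section Aux

open SimpleGraph

namespace TreeCutDecomp

variable {V E T : Type} {G : Multigraph V E}

lemma bag_eq (D : TreeCutDecomp G T) {x : V} {s₁ s₂ : T}
    (h1 : x ∈ D.bag s₁) (h2 : x ∈ D.bag s₂) : s₁ = s₂ := by
  by_contra hne
  exact Set.disjoint_left.mp (D.disjoint_bags s₁ s₂ hne) h1 h2

lemma mem_sideBags {D : TreeCutDecomp G T} {t₁ t₂ : T} {x : V} :
    x ∈ D.sideBags t₁ t₂ ↔ ∃ s ∈ D.side t₁ t₂, x ∈ D.bag s := by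
  simp [TreeCutDecomp.sideBags]

lemma mem_compBags {D : TreeCutDecomp G T} {C : Set T} {s : T} {x : V} :
    x ∈ D.compBags C s ↔ ∃ s', D.compRel C s s' ∧ x ∈ D.bag s' := by
  simp [TreeCutDecomp.compBags]

lemma side_refl (D : TreeCutDecomp G T) (t₁ t₂ : T) : t₁ ∈ D.side t₁ t₂ :=
  Relation.ReflTransGen.refl

lemma side_step (D : TreeCutDecomp G T) {t₁ t₂ a c : T} (ha : a ∈ D.side t₁ t₂)
    (hadj : D.tree.Adj a c) (h1 : ¬(a = t₁ ∧ c = t₂)) (h2 : ¬(a = t₂ ∧ c = t₁)) :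
    c ∈ D.side t₁ t₂ :=
  Relation.ReflTransGen.tail ha ⟨hadj, h1, h2⟩

/-- The tree with the edge `t₁t₂` deleted. -/
def delGraph (D : TreeCutDecomp G T) (t₁ t₂ : T) : SimpleGraph T where
  Adj x y := D.tree.Adj x y ∧ ¬(x = t₁ ∧ y = t₂) ∧ ¬(x = t₂ ∧ y = t₁)
  symm := by
    constructor
    rintro x y ⟨h, h1, h2⟩
    exact ⟨h.symm, fun ⟨a, b⟩ => h2 ⟨b, a⟩, fun ⟨a, b⟩ => h1 ⟨b, a⟩⟩
  loopless := ⟨fun x h => D.tree.loopless.irrefl x h.1⟩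

lemma side_disjoint (D : TreeCutDecomp G T) {t₁ t₂ : T} (hadj : D.tree.Adj t₁ t₂) :
    Disjoint (D.side t₁ t₂) (D.side t₂ t₁) := by
  classical
  rw [Set.disjoint_left]
  intro s hs1 hs2
  have h1 : (D.delGraph t₁ t₂).Reachable t₁ s :=
    (SimpleGraph.reachable_iff_reflTransGen t₁ s).mpr hs1
  have h2 : (D.delGraph t₂ t₁).Reachable t₂ s :=
    (SimpleGraph.reachable_iff_reflTransGen t₂ s).mpr hs2
  obtain ⟨W1⟩ := h1
  obtain ⟨W2⟩ := h2
  have hW1 : ∀ e ∈ W1.edges, e ∈ D.tree.edgeSet := fun e he => by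
    have := W1.edges_subset_edgeSet he
    exact Sym2.ind (fun x y (h : (D.delGraph t₁ t₂).Adj x y) => h.1) e this
  have hW2 : ∀ e ∈ W2.edges, e ∈ D.tree.edgeSet := fun e he => by
    have := W2.edges_subset_edgeSet he
    exact Sym2.ind (fun x y (h : (D.delGraph t₂ t₁).Adj x y) => h.1) e this
  have hne1 : s(t₁, t₂) ∉ W1.edges := fun hmem => by
    have := W1.edges_subset_edgeSet hmem
    rw [SimpleGraph.mem_edgeSet] at this
    exact this.2.1 ⟨rfl, rfl⟩
  have hne2 : s(t₁, t₂) ∉ W2.edges := fun hmem => by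
    have := W2.edges_subset_edgeSet hmem
    rw [SimpleGraph.mem_edgeSet] at this
    exact this.2.2 ⟨rfl, rfl⟩
  let q : D.tree.Walk t₁ t₂ := (W1.transfer D.tree hW1).append (W2.transfer D.tree hW2).reverse
  have hq : s(t₁, t₂) ∉ q.edges := by
    simp only [q, SimpleGraph.Walk.edges_append, SimpleGraph.Walk.edges_reverse,
      List.mem_append, List.mem_reverse, SimpleGraph.Walk.edges_transfer]
    rintro (h | h)
    · exact hne1 h
    · exact hne2 h
  have hw0 : (SimpleGraph.Walk.cons hadj SimpleGraph.Walk.nil).IsPath := by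
    simp [hadj.ne]
  have heq : (q.toPath : D.tree.Walk t₁ t₂) = SimpleGraph.Walk.cons hadj SimpleGraph.Walk.nil :=
    (D.isTree.existsUnique_path t₁ t₂).unique q.toPath.property hw0
  have hmem : s(t₁, t₂) ∈ (q.toPath : D.tree.Walk t₁ t₂).edges := by
    rw [heq]; simp
  exact hq (SimpleGraph.Walk.edges_toPath_subset q hmem)

lemma not_mem_side (D : TreeCutDecomp G T) {t₁ t₂ : T} (hadj : D.tree.Adj t₁ t₂) :
    t₂ ∉ D.side t₁ t₂ := fun h =>
  Set.disjoint_left.mp (side_disjoint D hadj) h (side_refl D t₂ t₁)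

lemma side_cover (D : TreeCutDecomp G T) (t₁ t₂ s : T) :
    s ∈ D.side t₁ t₂ ∪ D.side t₂ t₁ := by
  classical
  have hreach : Relation.ReflTransGen D.tree.Adj t₁ s :=
    (SimpleGraph.reachable_iff_reflTransGen t₁ s).mp (D.isTree.isConnected.preconnected t₁ s)
  induction hreach with
  | refl => exact Or.inl (side_refl D t₁ t₂)
  | @tail x y _ step ih =>
    by_cases h1 : x = t₁ ∧ y = t₂
    · exact Or.inr (h1.2 ▸ side_refl D t₂ t₁)
    · by_cases h2 : x = t₂ ∧ y = t₁
      · exact Or.inl (h2.2 ▸ side_refl D t₁ t₂)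
      · rcases ih with hx | hx
        · exact Or.inl (side_step D hx step h1 h2)
        · refine Or.inr (side_step D hx step ?_ ?_)
          · rintro ⟨a, b⟩; exact h2 ⟨a, b⟩
          · rintro ⟨a, b⟩; exact h1 ⟨a, b⟩

lemma sideBags_disjoint (D : TreeCutDecomp G T) {t₁ t₂ : T} (hadj : D.tree.Adj t₁ t₂) :
    Disjoint (D.sideBags t₁ t₂) (D.sideBags t₂ t₁) := by
  rw [Set.disjoint_left]
  intro x hx1 hx2
  obtain ⟨s₁, hs₁, hb₁⟩ := mem_sideBags.mp hx1
  obtain ⟨s₂, hs₂, hb₂⟩ := mem_sideBags.mp hx2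
  rw [bag_eq D hb₁ hb₂] at hs₁
  exact Set.disjoint_left.mp (side_disjoint D hadj) hs₁ hs₂

lemma sideBags_compl (D : TreeCutDecomp G T) {t₁ t₂ : T} (hadj : D.tree.Adj t₁ t₂) :
    D.sideBags t₂ t₁ = (D.sideBags t₁ t₂)ᶜ := by
  ext v
  constructor
  · intro hv
    exact Set.disjoint_right.mp (sideBags_disjoint D hadj) hv
  · intro hv
    obtain ⟨s, hs⟩ := D.cover v
    rcases side_cover D t₁ t₂ s with h | h
    · exact absurd (mem_sideBags.mpr ⟨s, h, hs⟩) hv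
    · exact mem_sideBags.mpr ⟨s, h, hs⟩

lemma side_subset_side (D : TreeCutDecomp G T) {a b t : T} (hab : D.tree.Adj a b)
    (hbt : D.tree.Adj b t) (hat : a ≠ t) : D.side a b ⊆ D.side b t := by
  intro s hs
  induction hs with
  | refl =>
    refine side_step D (side_refl D b t) hab.symm ?_ ?_
    · rintro ⟨-, h⟩; exact hat h
    · rintro ⟨h, -⟩; exact hbt.ne h
  | @tail x y hxs step ih =>
    have hy : y ∈ D.side a b := Relation.ReflTransGen.tail hxs step
    have hxne : x ≠ b := fun h => not_mem_side D hab (h ▸ hxs)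
    have hyne : y ≠ b := fun h => not_mem_side D hab (h ▸ hy)
    refine side_step D ih step.1 ?_ ?_
    · rintro ⟨h1, -⟩; exact hxne h1
    · rintro ⟨-, h2⟩; exact hyne h2

lemma compRel_ne (D : TreeCutDecomp G T) {C : Set T} {a b : T}
    (h : D.compRel C a b) (ha : a ∉ C) : b ∉ C := by
  induction h with
  | refl => exact ha
  | tail _ step _ => exact step.2.2

lemma compRel_symm (D : TreeCutDecomp G T) {C : Set T} {a b : T}
    (h : D.compRel C a b) : D.compRel C b a := by
  have hsymm : Symmetric (fun x y : T => D.tree.Adj x y ∧ x ∉ C ∧ y ∉ C) :=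
    fun x y ⟨h1, h2, h3⟩ => ⟨h1.symm, h3, h2⟩
  haveI : Std.Symm (fun x y : T => D.tree.Adj x y ∧ x ∉ C ∧ y ∉ C) := ⟨fun _ _ hh => hsymm hh⟩
  exact Std.Symm.symm (r := Relation.ReflTransGen _) _ _ h

lemma compRel_side (D : TreeCutDecomp G T) {t₀ t a b : T}
    (h : D.compRel {t₀} a b) (ha : a ∈ D.side t t₀) : b ∈ D.side t t₀ := by
  induction h with
  | refl => exact ha
  | tail _ step ih =>
    refine side_step D ih step.1 ?_ ?_
    · rintro ⟨-, h2⟩; exact step.2.2 (by simp [h2])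
    · rintro ⟨h1, -⟩; exact step.2.1 (by simp [h1])

lemma crossing_subset_torso (D : TreeCutDecomp G T) (t₀ : T) (U : Set V)
    (hU : ∀ x ∈ U, ∃ t, x ∈ D.sideBags t t₀ ∧ D.sideBags t t₀ ⊆ U) :
    {e | G.crosses U Uᶜ e} ⊆ D.torsoEdges {t₀} := by
  rintro e ⟨⟨x, hxe, hxU⟩, ⟨y, hye, hyU⟩⟩
  rintro ⟨s, _, hall⟩
  obtain ⟨t, hxt, htU⟩ := hU x hxU
  obtain ⟨s₂, hs₂, hxb₂⟩ := mem_sideBags.mp hxt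
  obtain ⟨s₁, hrel₁, hxb₁⟩ := mem_compBags.mp (hall x hxe)
  rw [bag_eq D hxb₁ hxb₂] at hrel₁
  have hsmem : s ∈ D.side t t₀ := compRel_side D (compRel_symm D hrel₁) hs₂
  obtain ⟨s₃, hrel₃, hyb₃⟩ := mem_compBags.mp (hall y hye)
  have hs₃ : s₃ ∈ D.side t t₀ := compRel_side D hrel₃ hsmem
  exact hyU (htU (mem_sideBags.mpr ⟨s₃, hs₃, hyb₃⟩))

lemma incident_bag_subset_torso (D : TreeCutDecomp G T) (t₀ : T) :
    {e | G.incident (D.bag t₀) e} ⊆ D.torsoEdges {t₀} := by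
  rintro e ⟨x, hxe, hxb⟩
  rintro ⟨s, hs, hall⟩
  obtain ⟨s₁, hrel, hxb₁⟩ := mem_compBags.mp (hall x hxe)
  have h1 : s₁ = t₀ := bag_eq D hxb₁ hxb
  exact compRel_ne D hrel hs (by simp [h1])

end TreeCutDecomp

end Aux

/-- Let `G` be a graph and `w` a positive integer. If the
tree-cut torso-width of `G` is at most `w`, then there exists no edge-tangle of
order at least `w+1` in `G`. -/
theorem no_edgeTangle_of_torsoWidth_le {V E : Type} [Fintype V] [Fintype E]
    (G : Multigraph V E) (w : ℕ) (hw : 0 < w)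
    (h : ∃ (T : Type) (D : TreeCutDecomp G T),
      ∀ t : T, (D.torsoEdges {t}).ncard ≤ w) :
    ∀ θ : ℕ, w + 1 ≤ θ → IsEmpty (EdgeTangle G θ) := by
  intro θ hθ
  obtain ⟨T, D, hD⟩ := h
  constructor
  intro 𝒯
  classical
  haveI : Finite T := D.finite
  haveI : Fintype T := Fintype.ofFinite T
  have hwθ : w < θ := by omega
  have hθ0 : 0 < θ := by omega
  -- the empty cut is oriented towards `univ`
  have mem_empty : 𝒯.mem ∅ Set.univ := by
    have hcut : G.IsCut ∅ Set.univ := ⟨by simp, by simp⟩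
    have hcr : {e | G.crosses ∅ Set.univ e} = (∅ : Set E) := by
      ext e; simp [Multigraph.crosses, Multigraph.incident]
    have hord : G.cutOrder ∅ Set.univ < θ := by
      show ({e | G.crosses ∅ Set.univ e}).ncard < θ
      rw [hcr]; simpa using hθ0
    rcases 𝒯.e1 ∅ Set.univ hcut hord with h | h
    · exact h
    · exfalso
      have h3 := 𝒯.e3 Set.univ ∅ h
      have : {e | G.incident (∅ : Set V) e} = (∅ : Set E) := by
        ext e; simp [Multigraph.incident]
      rw [this] at h3
      simp at h3
      omega
  by_cases hT : Nonempty T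
  case neg =>
    -- no tree nodes, so no vertices
    have hV : ∀ v : V, False := fun v => hT ⟨(D.cover v).choose⟩
    have h3 := 𝒯.e3 ∅ Set.univ mem_empty
    have : {e | G.incident (Set.univ : Set V) e} = (∅ : Set E) := by
      ext e
      simp only [Set.mem_setOf_eq, Set.mem_empty_iff_false, iff_false]
      rintro ⟨x, -, -⟩
      exact hV x
    rw [this] at h3
    simp at h3
    omega
  case pos =>
  -- orientation of tree edges induced by the tangle
  set R : T → T → Prop := fun a b => 𝒯.mem (D.sideBags a b) (D.sideBags b a) with hR
  have cutlt : ∀ (t : T) (A : Set V),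
      {e | G.crosses A Aᶜ e} ⊆ D.torsoEdges {t} → G.cutOrder A Aᶜ < θ := by
    intro t A hsub
    have h1 : ({e | G.crosses A Aᶜ e}).ncard ≤ w :=
      le_trans (Set.ncard_le_ncard hsub (Set.toFinite _)) (hD t)
    exact lt_of_le_of_lt h1 hwθ
  have orient : ∀ a b : T, D.tree.Adj a b → R a b ∨ R b a := by
    intro a b hadj
    have hc := TreeCutDecomp.sideBags_compl D hadj
    have hcut : G.IsCut (D.sideBags a b) (D.sideBags b a) := by
      rw [hc]; exact ⟨disjoint_compl_right, Set.union_compl_self _⟩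
    have hord : G.cutOrder (D.sideBags a b) (D.sideBags b a) < θ := by
      rw [hc]
      exact cutlt b _ (TreeCutDecomp.crossing_subset_torso D b _
        (fun x hx => ⟨a, hx, subset_rfl⟩))
    exact 𝒯.e1 _ _ hcut hord
  have hR_not_both : ∀ a b : T, D.tree.Adj a b → R a b → R b a → False := by
    intro a b hadj h1 h2
    obtain ⟨x, hx⟩ := 𝒯.e2 _ _ _ _ _ _ h1 h2 h1
    exact Set.disjoint_left.mp (TreeCutDecomp.sideBags_disjoint D hadj) hx.1.2 hx.1.1
  -- find a sink of the orientation
  have hsinkex : ∃ t₀ : T, ∀ t : T, D.tree.Adj t t₀ → R t t₀ := by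
    by_cases hedge : ∃ a b : T, D.tree.Adj a b
    · obtain ⟨a0, b0, hab0⟩ := hedge
      have hne : ({p : T × T | D.tree.Adj p.1 p.2 ∧ R p.1 p.2}).Nonempty := by
        rcases orient a0 b0 hab0 with h | h
        · exact ⟨(a0, b0), hab0, h⟩
        · exact ⟨(b0, a0), hab0.symm, h⟩
      obtain ⟨⟨a, b⟩, ⟨hab, hRab⟩, hmax⟩ :=
        Set.exists_max_image _ (fun p : T × T => (D.side p.1 p.2).ncard)
          (Set.toFinite _) hne
      refine ⟨b, ?_⟩
      intro t hadj
      rcases orient t b hadj with h | h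
      · exact h
      · exfalso
        by_cases hta : t = a
        · subst hta
          exact hR_not_both t b hadj hRab h
        · have hpair : (b, t) ∈ {p : T × T | D.tree.Adj p.1 p.2 ∧ R p.1 p.2} :=
            ⟨hadj.symm, h⟩
          have hle := hmax (b, t) hpair
          have hsub : D.side a b ⊆ D.side b t :=
            TreeCutDecomp.side_subset_side D hab hadj.symm (fun hh => hta hh.symm)
          have hlt : (D.side a b).ncard < (D.side b t).ncard :=
            Set.ncard_lt_ncard
              ⟨hsub, fun hsup => TreeCutDecomp.not_mem_side D hab
                (hsup (TreeCutDecomp.side_refl D b t))⟩ (Set.toFinite _)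
          simp only at hle hlt
          omega
    · obtain ⟨t₀⟩ := hT
      exact ⟨t₀, fun t hadj => absurd ⟨t, t₀, hadj⟩ hedge⟩
  obtain ⟨t₀, hsink⟩ := hsinkex
  -- induction over sets of neighbours of the sink
  have hind : ∀ F : Finset T, (∀ t ∈ F, D.tree.Adj t t₀) →
      𝒯.mem (⋃ t ∈ F, D.sideBags t t₀) (⋃ t ∈ F, D.sideBags t t₀)ᶜ := by
    intro F
    induction F using Finset.induction_on with
    | empty =>
      intro _
      have h0 : (⋃ t ∈ (∅ : Finset T), D.sideBags t t₀) = (∅ : Set V) := by simp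
      rw [h0, Set.compl_empty]
      exact mem_empty
    | @insert a F' ha ih =>
      intro hadjF
      have hadj : D.tree.Adj a t₀ := hadjF a (Finset.mem_insert_self a F')
      have ihm := ih (fun t ht => hadjF t (Finset.mem_insert_of_mem ht))
      have hcut : G.IsCut (⋃ t ∈ insert a F', D.sideBags t t₀)
          (⋃ t ∈ insert a F', D.sideBags t t₀)ᶜ :=
        ⟨disjoint_compl_right, Set.union_compl_self _⟩
      have hsub : {e | G.crosses (⋃ t ∈ insert a F', D.sideBags t t₀)
          (⋃ t ∈ insert a F', D.sideBags t t₀)ᶜ e} ⊆ D.torsoEdges {t₀} := by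
        apply TreeCutDecomp.crossing_subset_torso
        intro x hx
        obtain ⟨t, ht, hxt⟩ := Set.mem_iUnion₂.mp hx
        exact ⟨t, hxt, Set.subset_iUnion₂ (s := fun t _ => D.sideBags t t₀) t ht⟩
      rcases 𝒯.e1 _ _ hcut (cutlt t₀ _ hsub) with hgood | hbad
      · exact hgood
      · exfalso
        obtain ⟨x, hx⟩ := 𝒯.e2 _ _ _ _ _ _ ihm (hsink a hadj) hbad
        obtain ⟨⟨hx1, hx2⟩, hx3⟩ := hx
        obtain ⟨t, ht, hxt⟩ := Set.mem_iUnion₂.mp hx3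
        rcases Finset.mem_insert.mp ht with rfl | htF
        · exact Set.disjoint_left.mp (TreeCutDecomp.sideBags_disjoint D hadj) hxt hx2
        · exact hx1 (Set.mem_iUnion₂.mpr ⟨t, htF, hxt⟩)
  -- the union over all neighbours is the complement of the central bag
  set Nf : Finset T := Finset.univ.filter (fun t => D.tree.Adj t t₀) with hNf
  have hNadj : ∀ t ∈ Nf, D.tree.Adj t t₀ := fun t ht => (Finset.mem_filter.mp ht).2
  have hmemN := hind Nf hNadj
  have hUN : (⋃ t ∈ Nf, D.sideBags t t₀) = (D.bag t₀)ᶜ := by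
    ext v
    constructor
    · intro hv
      obtain ⟨t, ht, hvt⟩ := Set.mem_iUnion₂.mp hv
      obtain ⟨s', hs', hvb'⟩ := TreeCutDecomp.mem_sideBags.mp hvt
      intro hvb
      rw [TreeCutDecomp.bag_eq D hvb' hvb] at hs'
      exact TreeCutDecomp.not_mem_side D (hNadj t ht) hs'
    · intro hvb
      obtain ⟨s, hvs⟩ := D.cover v
      have hreach : Relation.ReflTransGen D.tree.Adj t₀ s :=
        (SimpleGraph.reachable_iff_reflTransGen t₀ s).mp
          (D.isTree.isConnected.preconnected t₀ s)
      have hcases : ∀ s' : T, Relation.ReflTransGen D.tree.Adj t₀ s' →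
          s' = t₀ ∨ ∃ t, D.tree.Adj t t₀ ∧ s' ∈ D.side t t₀ := by
        intro s' hrel
        induction hrel with
        | refl => exact Or.inl rfl
        | @tail x y _ step ih =>
          by_cases hyt : y = t₀
          · exact Or.inl hyt
          · rcases ih with rfl | ⟨t, hadj, hx⟩
            · exact Or.inr ⟨y, step.symm, TreeCutDecomp.side_refl D y x⟩
            · refine Or.inr ⟨t, hadj, TreeCutDecomp.side_step D hx step ?_ ?_⟩
              · rintro ⟨-, h2⟩; exact hyt h2
              · rintro ⟨h1, -⟩
                exact TreeCutDecomp.not_mem_side D hadj (h1 ▸ hx)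
      rcases hcases s hreach with rfl | ⟨t, hadj, hside⟩
      · exact absurd hvs hvb
      · refine Set.mem_iUnion₂.mpr ⟨t, ?_, TreeCutDecomp.mem_sideBags.mpr ⟨s, hside, hvs⟩⟩
        exact Finset.mem_filter.mpr ⟨Finset.mem_univ t, hadj⟩
  rw [hUN, compl_compl] at hmemN
  have h3 := 𝒯.e3 _ _ hmemN
  have h4 : ({e | G.incident (D.bag t₀) e}).ncard ≤ w :=
    le_trans (Set.ncard_le_ncard (TreeCutDecomp.incident_bag_subset_torso D t₀)
      (Set.toFinite _)) (hD t₀)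
  omega
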